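/- The Cline-type density f(x) = a e^{−χ(x)} (x ≥ 0) is long-tailed: for each constant t ∈ ℝ, f(x+t)/f(x) → 1 as x → ∞ (equivalently, χ(x+t) − χ(x) → 0 for each t); that is, f ∈ 𝓛₀. -/

import Mathlib

open MeasureTheory Filter Set

noncomputable section

/-- `χ(x) = x^{1/2 + δ·cos(ln(x+1))}` (real power). -/
def chiFn (δ : ℝ) (x : ℝ) : ℝ := x ^ ((1:ℝ)/2 + δ * Real.cos (Real.log (x + 1)))

/-- The normalizing constant `a = (∫₀^∞ e^{-χ(y)} dy)⁻¹`. -/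
def clineA (δ : ℝ) : ℝ := (∫ y in Set.Ioi (0:ℝ), Real.exp (-chiFn δ y))⁻¹

/-- The Cline-type density `f(x) = a e^{-χ(x)}` for `x ≥ 0`, `0` for `x < 0`. -/
def clineF (δ : ℝ) (x : ℝ) : ℝ :=
  if x < 0 then 0 else clineA δ * Real.exp (-chiFn δ x)

/-- The long-tailed density class `𝓛₀`. -/
def LongTailedDensity (f : ℝ → ℝ) : Prop :=
  (∀ᶠ x in atTop, 0 < f x) ∧
  ∀ t : ℝ, Tendsto (fun x => f (x + t) / f x) atTop (nhds 1)

/-- cosine is 1-Lipschitz. -/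
lemma abs_cos_sub_cos_le' (a b : ℝ) : |Real.cos a - Real.cos b| ≤ |a - b| := by
  rw [Real.cos_sub_cos, abs_mul, abs_mul]
  have h1 : |Real.sin ((a + b) / 2)| ≤ 1 :=
    abs_le.mpr ⟨Real.neg_one_le_sin _, Real.sin_le_one _⟩
  have h2 : |Real.sin ((a - b) / 2)| ≤ |a - b| / 2 := by
    have := Real.abs_sin_le_abs (x := (a - b) / 2)
    rwa [abs_div, abs_two] at this
  have h3 : (0:ℝ) ≤ |Real.sin ((a - b) / 2)| := abs_nonneg _
  have h4 : (0:ℝ) ≤ |Real.sin ((a + b) / 2)| := abs_nonneg _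
  rw [show |(-2:ℝ)| = 2 by norm_num]
  nlinarith [abs_nonneg (a - b), mul_le_mul h1 h2 h3 (by norm_num : (0:ℝ) ≤ 1)]

/-- increment bound for the logarithm. -/
lemma log_diff_le' {x u : ℝ} (hx : 2 * |u| + 2 ≤ x) :
    |Real.log (x + u) - Real.log x| ≤ 2 * |u| / x := by
  have hu : 0 ≤ |u| := abs_nonneg u
  have hx0 : 0 < x := by linarith
  have hxu : x / 2 ≤ x + u := by nlinarith [neg_abs_le u]
  have hxu0 : 0 < x + u := by nlinarith
  rw [abs_sub_le_iff]
  constructor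
  · have h := Real.log_le_sub_one_of_pos (x := (x + u) / x) (by positivity)
    rw [Real.log_div (ne_of_gt hxu0) (ne_of_gt hx0)] at h
    have e : (x + u) / x - 1 = u / x := by field_simp; ring
    rw [e] at h
    have h2 : u / x ≤ 2 * |u| / x := by
      gcongr
      nlinarith [le_abs_self u]
    linarith
  · have h := Real.log_le_sub_one_of_pos (x := x / (x + u)) (by positivity)
    rw [Real.log_div (ne_of_gt hx0) (ne_of_gt hxu0)] at h
    have e : x / (x + u) - 1 = -u / (x + u) := by field_simp; ring
    rw [e] at h
    have h1 : -u / (x + u) ≤ |u| / (x + u) := by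
      gcongr
      exact neg_le_abs u
    have h2 : |u| / (x + u) ≤ |u| / (x / 2) := by
      gcongr
    have h3 : |u| / (x / 2) = 2 * |u| / x := by
      rw [div_div_eq_mul_div]
      ring_nf
    linarith

/-- The key analytic fact: `χ(x+t) - χ(x) → 0`. -/
lemma chi_diff_tendsto (δ : ℝ) (hδ0 : 0 < δ) (hδ : δ < 1/2) (t : ℝ) :
    Tendsto (fun x => chiFn δ (x + t) - chiFn δ x) atTop (nhds 0) := by
  set P : ℝ → ℝ := fun x => 1/2 + δ * Real.cos (Real.log (x + 1)) with hP
  have hPle : ∀ x, |P x| ≤ 1 := by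
    intro x
    have h1 : |Real.cos (Real.log (x + 1))| ≤ 1 := Real.abs_cos_le_one _
    simp only [hP]
    rw [abs_le] at h1 ⊢
    constructor <;> nlinarith [h1.1, h1.2]
  have hPub : ∀ x, P x ≤ 1/2 + δ := by
    intro x
    have h1 : Real.cos (Real.log (x + 1)) ≤ 1 := Real.cos_le_one _
    simp only [hP]
    nlinarith
  have hs : (0:ℝ) < 1/2 - δ := by linarith
  -- the squeeze bound tends to zero
  have hB : Tendsto (fun x : ℝ => 4 * |t| * ((1 + Real.log x) * x ^ (δ - 1/2)))
      atTop (nhds 0) := by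
    have h1 : Tendsto (fun x : ℝ => x ^ (δ - 1/2)) atTop (nhds 0) := by
      have := tendsto_rpow_neg_atTop hs
      have e : -(1/2 - δ) = δ - 1/2 := by ring
      simpa [e] using this
    have h2 : Tendsto (fun x : ℝ => Real.log x * x ^ (δ - 1/2)) atTop (nhds 0) := by
      have h3 := (isLittleO_log_rpow_atTop hs).tendsto_div_nhds_zero
      refine h3.congr' ?_
      filter_upwards [eventually_gt_atTop (0:ℝ)] with x hx
      rw [div_eq_mul_inv, ← Real.rpow_neg hx.le]
      congr 1
      ring
    have h4 := (h1.add h2).const_mul (4 * |t|)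
    simp only [add_zero, mul_zero] at h4
    refine h4.congr fun x => ?_
    ring
  -- eventual smallness of the increment factor
  have hsmall : Tendsto (fun x : ℝ => 2 * |t| * (1 + Real.log x) / x) atTop (nhds 0) := by
    have h1 : Tendsto (fun x : ℝ => (1:ℝ) / x) atTop (nhds 0) := by
      simpa [one_div] using (tendsto_inv_atTop_zero : Tendsto (fun x:ℝ => x⁻¹) atTop (nhds 0))
    have h2 : Tendsto (fun x : ℝ => Real.log x / x) atTop (nhds 0) :=
      Real.isLittleO_log_id_atTop.tendsto_div_nhds_zero
    have h3 := (h1.add h2).const_mul (2 * |t|)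
    simp only [add_zero, mul_zero] at h3
    refine h3.congr fun x => ?_
    ring
  have hev3 : ∀ᶠ x : ℝ in atTop, 2 * |t| * (1 + Real.log x) / x ≤ 1 :=
    hsmall.eventually_lt_const one_pos |>.mono fun x hx => hx.le
  refine squeeze_zero_norm' ?_ hB
  filter_upwards [eventually_ge_atTop (2 * |t| + 2), eventually_ge_atTop (2 * |t| + 1),
    hev3, eventually_ge_atTop (1:ℝ)] with x hx1 hx2 h3 hx4
  have hx0 : 0 < x := by nlinarith [abs_nonneg t]
  have hxt0 : 0 < x + t := by nlinarith [neg_abs_le t]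
  have hlogx : 0 ≤ Real.log x := Real.log_nonneg hx4
  -- bound the increment of the exponent
  set D : ℝ := Real.log (x + t) * P (x + t) - Real.log x * P x with hD
  have l1 : |Real.log (x + t) - Real.log x| ≤ 2 * |t| / x := log_diff_le' hx1
  have l2 : |Real.log (x + t + 1) - Real.log (x + 1)| ≤ 2 * |t| / (x + 1) := by
    have h := log_diff_le' (x := x + 1) (u := t) (by linarith)
    rw [show x + 1 + t = x + t + 1 from by ring] at h
    exact h
  have l3 : |P (x + t) - P x| ≤ 2 * |t| / x := by
    have e : P (x + t) - P x
        = δ * (Real.cos (Real.log (x + t + 1)) - Real.cos (Real.log (x + 1))) := by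
      simp only [hP]
      ring
    rw [e, abs_mul, abs_of_pos hδ0]
    have hc := abs_cos_sub_cos_le' (Real.log (x + t + 1)) (Real.log (x + 1))
    have hcomp : 2 * |t| / (x + 1) ≤ 2 * |t| / x := by
      gcongr
      linarith
    have hd : (0:ℝ) ≤ 2 * |t| / (x + 1) := by positivity
    nlinarith [abs_nonneg (Real.cos (Real.log (x + t + 1)) - Real.cos (Real.log (x + 1)))]
  have hDle : |D| ≤ 2 * |t| * (1 + Real.log x) / x := by
    have e : D = (Real.log (x + t) - Real.log x) * P (x + t)
        + Real.log x * (P (x + t) - P x) := by rw [hD]; ring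
    rw [e]
    have step1 := (abs_add_le ((Real.log (x + t) - Real.log x) * P (x + t))
      (Real.log x * (P (x + t) - P x)))
    rw [abs_mul, abs_mul, abs_of_nonneg hlogx] at step1
    have b1 : |Real.log (x + t) - Real.log x| * |P (x + t)| ≤ (2 * |t| / x) * 1 :=
      mul_le_mul l1 (hPle _) (abs_nonneg _) (by positivity)
    have b2 : Real.log x * |P (x + t) - P x| ≤ Real.log x * (2 * |t| / x) :=
      mul_le_mul_of_nonneg_left l3 hlogx
    have e2 : (2 * |t| / x) * 1 + Real.log x * (2 * |t| / x)
        = 2 * |t| * (1 + Real.log x) / x := by ring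
    linarith
  have hD1 : |D| ≤ 1 := hDle.trans h3
  -- express the difference of χ values
  have hchix : chiFn δ x = Real.exp (Real.log x * P x) := Real.rpow_def_of_pos hx0 _
  have hchixt : chiFn δ (x + t) = Real.exp (Real.log (x + t) * P (x + t)) :=
    Real.rpow_def_of_pos hxt0 _
  have keyeq : chiFn δ (x + t) - chiFn δ x
      = Real.exp (Real.log x * P x) * (Real.exp D - 1) := by
    rw [hchix, hchixt, mul_sub, mul_one, ← Real.exp_add]
    congr 2
    rw [hD]; ring
  have hexpD : |Real.exp D - 1| ≤ 2 * |D| := Real.abs_exp_sub_one_le hD1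
  have hexpg : Real.exp (Real.log x * P x) ≤ x ^ ((1:ℝ)/2 + δ) := by
    rw [← hchix]
    exact Real.rpow_le_rpow_of_exponent_le hx4 (hPub x)
  have hxpow : x ^ ((1:ℝ)/2 + δ) = x ^ (δ - 1/2) * x := by
    rw [← Real.rpow_add_one (ne_of_gt hx0)]
    congr 1
    ring
  calc ‖chiFn δ (x + t) - chiFn δ x‖
      = Real.exp (Real.log x * P x) * |Real.exp D - 1| := by
        rw [Real.norm_eq_abs, keyeq, abs_mul, abs_of_pos (Real.exp_pos _)]
    _ ≤ x ^ ((1:ℝ)/2 + δ) * (2 * (2 * |t| * (1 + Real.log x) / x)) := by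
        refine mul_le_mul hexpg (hexpD.trans ?_) (abs_nonneg _) (by positivity)
        linarith
    _ = 4 * |t| * ((1 + Real.log x) * x ^ (δ - 1/2)) := by
        rw [hxpow]
        field_simp
        ring

lemma chiFn_measurable (δ : ℝ) : Measurable (chiFn δ) := by
  unfold chiFn
  measurability

lemma integrable_exp_neg_chi (δ : ℝ) (hδ0 : 0 < δ) (hδ : δ < 1/2) :
    IntegrableOn (fun y => Real.exp (-chiFn δ y)) (Set.Ioi (0:ℝ)) := by
  have hc : (0:ℝ) < 1/2 - δ := by linarith
  have hmeas : Measurable fun y : ℝ => Real.exp (-chiFn δ y) :=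
    Real.measurable_exp.comp (chiFn_measurable δ).neg
  -- choose a threshold beyond which `2 log x ≤ x ^ (1/2 - δ)`
  have hev : ∀ᶠ x : ℝ in atTop, Real.log x ≤ (1/2) * x ^ ((1:ℝ)/2 - δ) := by
    have h := (isLittleO_log_rpow_atTop hc).def (by norm_num : (0:ℝ) < 1/2)
    filter_upwards [h, eventually_ge_atTop (1:ℝ)] with x hx hx1
    have hxp : 0 ≤ x ^ ((1:ℝ)/2 - δ) := Real.rpow_nonneg (by linarith) _
    rw [Real.norm_eq_abs, Real.norm_eq_abs, abs_of_nonneg (Real.log_nonneg hx1),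
      abs_of_nonneg hxp] at hx
    exact hx
  obtain ⟨X, hX⟩ := eventually_atTop.mp hev
  set X' : ℝ := max X 1 with hX'
  have hX'1 : (1:ℝ) ≤ X' := le_max_right _ _
  have hX'0 : (0:ℝ) < X' := by linarith
  have union : Set.Ioc (0:ℝ) X' ∪ Set.Ioi X' = Set.Ioi 0 :=
    Set.Ioc_union_Ioi_eq_Ioi hX'0.le
  rw [← union]
  apply IntegrableOn.union
  · refine Measure.integrableOn_of_bounded (measure_Ioc_lt_top).ne
      hmeas.aestronglyMeasurable (M := 1) ?_
    filter_upwards [ae_restrict_mem measurableSet_Ioc] with y hy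
    have h0 : 0 ≤ chiFn δ y := Real.rpow_nonneg hy.1.le _
    rw [Real.norm_eq_abs, abs_of_pos (Real.exp_pos _)]
    calc Real.exp (-chiFn δ y) ≤ Real.exp 0 := Real.exp_le_exp.mpr (by linarith)
      _ = 1 := Real.exp_zero
  · refine Integrable.mono' (g := fun y : ℝ => y ^ (-2 : ℝ))
      (integrableOn_Ioi_rpow_of_lt (by norm_num) hX'0) hmeas.aestronglyMeasurable ?_
    filter_upwards [ae_restrict_mem measurableSet_Ioi] with y hy
    have hy1 : (1:ℝ) ≤ y := le_trans hX'1 (le_of_lt hy)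
    have hy0 : (0:ℝ) < y := by linarith
    have hlog : Real.log y ≤ (1/2) * y ^ ((1:ℝ)/2 - δ) :=
      hX y (le_trans (le_max_left _ _) (le_of_lt hy))
    have hchi : y ^ ((1:ℝ)/2 - δ) ≤ chiFn δ y := by
      apply Real.rpow_le_rpow_of_exponent_le hy1
      have := Real.neg_one_le_cos (Real.log (y + 1))
      nlinarith
    have h2 : 2 * Real.log y ≤ chiFn δ y := by linarith
    rw [Real.norm_eq_abs, abs_of_pos (Real.exp_pos _)]
    calc Real.exp (-chiFn δ y) ≤ Real.exp (Real.log y * (-2)) := by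
          apply Real.exp_le_exp.mpr
          linarith
      _ = y ^ (-2:ℝ) := (Real.rpow_def_of_pos hy0 _).symm

lemma clineA_pos (δ : ℝ) (hδ0 : 0 < δ) (hδ : δ < 1/2) : 0 < clineA δ := by
  rw [clineA, inv_pos]
  rw [setIntegral_pos_iff_support_of_nonneg_ae
    (Filter.Eventually.of_forall fun y => (Real.exp_pos _).le)
    (integrable_exp_neg_chi δ hδ0 hδ)]
  have hsupp : Function.support (fun y : ℝ => Real.exp (-chiFn δ y)) = Set.univ := by
    ext y
    simp [Function.support, (Real.exp_pos (-chiFn δ y)).ne']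
  rw [hsupp, Set.univ_inter, Real.volume_Ioi]
  exact ENNReal.zero_lt_top

theorem cline_density_long_tailed (δ : ℝ) (hδ0 : 0 < δ) (hδ : δ < 1/2) :
    (∀ t : ℝ, Tendsto (fun x => chiFn δ (x + t) - chiFn δ x) atTop (nhds 0)) ∧
    LongTailedDensity (clineF δ) := by
  have partA : ∀ t : ℝ, Tendsto (fun x => chiFn δ (x + t) - chiFn δ x) atTop (nhds 0) :=
    fun t => chi_diff_tendsto δ hδ0 hδ t
  have hA : 0 < clineA δ := clineA_pos δ hδ0 hδ
  refine ⟨partA, ?_, ?_⟩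
  · filter_upwards [eventually_ge_atTop (0:ℝ)] with x hx
    rw [clineF, if_neg (not_lt.mpr hx)]
    exact mul_pos hA (Real.exp_pos _)
  · intro t
    have hratio : ∀ᶠ x : ℝ in atTop,
        Real.exp (-(chiFn δ (x + t) - chiFn δ x)) = clineF δ (x + t) / clineF δ x := by
      filter_upwards [eventually_ge_atTop (max 0 (-t))] with x hx
      have hx0 : (0:ℝ) ≤ x := le_trans (le_max_left _ _) hx
      have hxt : (0:ℝ) ≤ x + t := by
        have := le_trans (le_max_right _ _) hx
        linarith
      rw [clineF, clineF, if_neg (not_lt.mpr hx0), if_neg (not_lt.mpr hxt),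
        mul_div_mul_left _ _ (ne_of_gt hA), ← Real.exp_sub]
      congr 1
      ring
    have hexp : Tendsto (fun x => Real.exp (-(chiFn δ (x + t) - chiFn δ x))) atTop (nhds 1) := by
      have h1 : Tendsto (fun x => -(chiFn δ (x + t) - chiFn δ x)) atTop (nhds 0) := by
        simpa using (partA t).neg
      have h2 := (Real.continuous_exp.tendsto 0).comp h1
      simpa [Function.comp_def] using h2
    exact hexp.congr' hratio
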